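/- Every unicycle digraph has at most two kernels; that is, a weakly connected finite digraph containing at most one cycle has 0, 1, or 2 kernels. -/

import Mathlib

/-- A digraph on the vertex set `Fin n`: a loopless Boolean arc relation (no multiple arcs
in the same direction, but the two opposite arcs may both be present). -/
structure FinDigraph (n : ℕ) where
  arc : Fin n → Fin n → Bool
  loopless : ∀ v, arc v v = false

/-- The number of arcs of a digraph. -/
def arcCount {n : ℕ} (D : FinDigraph n) : ℕ :=
  (Finset.univ.filter fun p : Fin n × Fin n => D.arc p.1 p.2 = true).card

/-- Weak connectivity: the underlying undirected graph is connected. -/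
def WeaklyConnected {n : ℕ} (D : FinDigraph n) : Prop :=
  (SimpleGraph.fromRel fun v w => D.arc v w = true).Connected

/-- A unicycle digraph: weakly connected with at most one cycle (a cycle being a closed
undirected path of length ≥ 2, a pair of opposite arcs counting as a cycle of length 2).
For a weakly connected digraph this is equivalent to having at most as many arcs as
vertices. -/
def IsUnicycle {n : ℕ} (D : FinDigraph n) : Prop :=
  WeaklyConnected D ∧ arcCount D ≤ n

/-- A unicircuit digraph: a unicycle digraph whose cycle, if it exists (i.e. when the
number of arcs equals the number of vertices), is a directed circuit (equivalently, there
is a directed closed walk). -/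
def IsUnicircuit {n : ℕ} (D : FinDigraph n) : Prop :=
  IsUnicycle D ∧
    (arcCount D = n → ∃ v, Relation.TransGen (fun a b => D.arc a b = true) v v)

/-- A kernel of a digraph: a nonempty independent dominating set of vertices. -/
def IsKernel {n : ℕ} (D : FinDigraph n) (K : Finset (Fin n)) : Prop :=
  K.Nonempty ∧ (∀ a ∈ K, ∀ b ∈ K, D.arc a b = false) ∧
    (∀ a, a ∉ K → ∃ b ∈ K, D.arc a b = true)

set_option maxHeartbeats 4000000

open Finset SimpleGraph



private lemma card_le_succ_of_almost_inj {α β : Type*} [Finite α] [Finite β] (f : α → β)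
    (x0 y0 : α)
    (hf : ∀ x y, f x = f y → x = y ∨ (x = x0 ∧ y = y0) ∨ (x = y0 ∧ y = x0)) :
    Nat.card α ≤ Nat.card β + 1 := by
  classical
  have hinj : Function.Injective
      (fun x : α => if x = x0 then (Sum.inr () : β ⊕ Unit) else Sum.inl (f x)) := by
    intro x y h
    by_cases hx : x = x0 <;> by_cases hy : y = x0
    · rw [hx, hy]
    · simp [hx, hy] at h
    · simp [hx, hy] at h
    · simp only [if_neg hx, if_neg hy, Sum.inl.injEq] at h
      rcases hf x y h with h' | ⟨h1, h2⟩ | ⟨h1, h2⟩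
      · exact h'
      · exact absurd h1 hx
      · exact absurd h2 hy
  calc Nat.card α ≤ Nat.card (β ⊕ Unit) := Nat.card_le_card_of_injective _ hinj
    _ = Nat.card β + 1 := by simp [Nat.card_sum]

private lemma reach_sup_edge {V : Type*} {G : SimpleGraph V} {a b : V} {u v : V}
    (w : (G ⊔ edge a b).Walk u v) :
    G.Reachable u v ∨ (G.Reachable u a ∧ G.Reachable b v) ∨
      (G.Reachable u b ∧ G.Reachable a v) := by
  induction w with
  | nil => exact Or.inl (Reachable.refl _)
  | @cons u x v h p ih =>
    rw [sup_adj] at h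
    rcases h with h | h
    · have hr : G.Reachable u x := h.reachable
      rcases ih with h' | ⟨h1, h2⟩ | ⟨h1, h2⟩
      · exact Or.inl (hr.trans h')
      · exact Or.inr (Or.inl ⟨hr.trans h1, h2⟩)
      · exact Or.inr (Or.inr ⟨hr.trans h1, h2⟩)
    · rw [edge_adj] at h
      rcases h.1 with ⟨rfl, rfl⟩ | ⟨rfl, rfl⟩
      · rcases ih with h' | ⟨h1, h2⟩ | ⟨h1, h2⟩
        · exact Or.inr (Or.inl ⟨Reachable.refl _, h'⟩)
        · exact Or.inr (Or.inl ⟨Reachable.refl _, h2⟩)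
        · exact Or.inl h2
      · rcases ih with h' | ⟨h1, h2⟩ | ⟨h1, h2⟩
        · exact Or.inr (Or.inr ⟨Reachable.refl _, h'⟩)
        · exact Or.inl h2
        · exact Or.inr (Or.inr ⟨Reachable.refl _, h2⟩)

private lemma card_comp_le_sup_edge {V : Type*} [Finite V] (G : SimpleGraph V) (a b : V) :
    Nat.card G.ConnectedComponent ≤ Nat.card (G ⊔ edge a b).ConnectedComponent + 1 := by
  apply card_le_succ_of_almost_inj
    (ConnectedComponent.map (Hom.ofLE (le_sup_left : G ≤ G ⊔ edge a b)))
    (G.connectedComponentMk a) (G.connectedComponentMk b)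
  intro x y
  refine ConnectedComponent.ind₂ ?_ x y
  intro u v h
  simp only [ConnectedComponent.map_mk, Hom.ofLE] at h
  have hr : (G ⊔ edge a b).Reachable u v := ConnectedComponent.exact h
  obtain ⟨w⟩ := hr
  rcases reach_sup_edge w with h' | ⟨h1, h2⟩ | ⟨h1, h2⟩
  · exact Or.inl (ConnectedComponent.sound h')
  · exact Or.inr (Or.inl ⟨ConnectedComponent.sound h1, (ConnectedComponent.sound h2).symm⟩)
  · exact Or.inr (Or.inr ⟨ConnectedComponent.sound h1, (ConnectedComponent.sound h2).symm⟩)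

private lemma comp_card_one {V : Type*} {G : SimpleGraph V} (h : G.Connected) :
    Nat.card G.ConnectedComponent = 1 := by
  haveI : Nonempty V := h.nonempty
  haveI : Nonempty G.ConnectedComponent := Nonempty.map G.connectedComponentMk ‹Nonempty V›
  haveI : Subsingleton G.ConnectedComponent := by
    constructor
    intro x y
    refine ConnectedComponent.ind₂ (fun u v => ConnectedComponent.sound (h.preconnected u v)) x y
  rw [Nat.card_eq_one_iff_unique]
  exact ⟨inferInstance, inferInstance⟩

private lemma comp_edge_aux {V : Type*} [Finite V] (k : ℕ) :
    ∀ G' G : SimpleGraph V, G' ≤ G → (G.edgeSet \ G'.edgeSet).ncard = k →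
      Nat.card G'.ConnectedComponent + G'.edgeSet.ncard ≤
        Nat.card G.ConnectedComponent + G.edgeSet.ncard := by
  induction k with
  | zero =>
    intro G' G hle hcard
    have hfin : (G.edgeSet \ G'.edgeSet).Finite := Set.toFinite _
    have : G.edgeSet \ G'.edgeSet = ∅ := by
      rwa [← Set.ncard_eq_zero hfin]
    have hsub : G.edgeSet ⊆ G'.edgeSet := by
      rwa [Set.diff_eq_empty] at this
    have : G = G' := le_antisymm ((edgeSet_subset_edgeSet).mp hsub) hle
    rw [this]
  | succ k ih =>
    intro G' G hle hcard
    have hfin : (G.edgeSet \ G'.edgeSet).Finite := Set.toFinite _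
    have hne : (G.edgeSet \ G'.edgeSet).Nonempty := by
      rw [Set.nonempty_iff_ne_empty]
      intro h
      rw [h, Set.ncard_empty] at hcard
      omega
    obtain ⟨e, he⟩ := hne
    induction e using Sym2.ind with
    | _ a b =>
    have hadj : G.Adj a b := (mem_edgeSet G).mp he.1
    have hne' : a ≠ b := hadj.ne
    have hnadj : ¬ G'.Adj a b := fun h => he.2 ((mem_edgeSet G').mpr h)
    set G'' := G' ⊔ edge a b with hG''
    have hle1 : G' ≤ G'' := le_sup_left
    have hle2 : G'' ≤ G := by
      apply sup_le hle
      intro x y hxy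
      rw [edge_adj] at hxy
      rcases hxy.1 with ⟨rfl, rfl⟩ | ⟨rfl, rfl⟩
      · exact hadj
      · exact hadj.symm
    have hedges : G''.edgeSet = insert s(a, b) G'.edgeSet := by
      rw [hG'', edgeSet_sup, edge_edgeSet_of_ne hne', Set.union_singleton]
    have hE'' : G''.edgeSet.ncard = G'.edgeSet.ncard + 1 := by
      rw [hedges, Set.ncard_insert_of_notMem he.2 (Set.toFinite _)]
    have hdiff : G.edgeSet \ G''.edgeSet = (G.edgeSet \ G'.edgeSet) \ {s(a, b)} := by
      rw [hedges]
      ext x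
      simp only [Set.mem_diff, Set.mem_insert_iff, Set.mem_singleton_iff]
      tauto
    have hk : (G.edgeSet \ G''.edgeSet).ncard = k := by
      rw [hdiff, Set.ncard_diff_singleton_of_mem he, hcard]
      omega
    have hIH := ih G'' G hle2 hk
    have hstep : Nat.card G'.ConnectedComponent ≤ Nat.card G''.ConnectedComponent + 1 :=
      card_comp_le_sup_edge G' a b
    omega

private lemma comp_edge {V : Type*} [Finite V] {G' G : SimpleGraph V} (hle : G' ≤ G)
    (hG : G.Connected) :
    Nat.card G'.ConnectedComponent + G'.edgeSet.ncard ≤ 1 + G.edgeSet.ncard := by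
  have := comp_edge_aux (G.edgeSet \ G'.edgeSet).ncard G' G hle rfl
  rwa [comp_card_one hG] at this


private lemma swap_count {n : ℕ} (q : Fin n → Fin n → Prop) [DecidableRel q] :
    (univ.filter fun p : Fin n × Fin n => q p.2 p.1).card
      = (univ.filter fun p : Fin n × Fin n => q p.1 p.2).card := by
  apply Finset.card_bij' (fun p _ => Prod.swap p) (fun p _ => Prod.swap p) <;>
    simp [Prod.swap]

private lemma incl_excl {n : ℕ} (q : Fin n → Fin n → Prop) [DecidableRel q] :
    (univ.filter fun p : Fin n × Fin n => q p.1 p.2 ∨ q p.2 p.1).card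
      + (univ.filter fun p : Fin n × Fin n => q p.1 p.2 ∧ q p.2 p.1).card
      = 2 * (univ.filter fun p : Fin n × Fin n => q p.1 p.2).card := by
  have h := Finset.card_union_add_card_inter
    (univ.filter fun p : Fin n × Fin n => q p.1 p.2)
    (univ.filter fun p : Fin n × Fin n => q p.2 p.1)
  rw [Finset.filter_union_right, ← Finset.filter_and] at h
  have h2 := swap_count q
  omega

private lemma kern_step {n : ℕ} {D : FinDigraph n} {A B : Finset (Fin n)}
    (hA : IsKernel D A) (hB : IsKernel D B) {v : Fin n} (hvA : v ∈ A) (hvB : v ∉ B) :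
    ∃ w, D.arc v w = true ∧ w ∈ B ∧ w ∉ A := by
  obtain ⟨w, hwB, harc⟩ := hB.2.2 v hvB
  refine ⟨w, harc, hwB, fun hwA => ?_⟩
  have := hA.2.1 v hvA w hwA
  simp [this] at harc


private lemma exists_out_lem {n : ℕ} {D : FinDigraph n} {K1 K2 K3 : Finset (Fin n)}
    (h1 : IsKernel D K1) (h2 : IsKernel D K2) (h3 : IsKernel D K3) {v : Fin n}
    (hv : ¬((v ∈ K1 ↔ v ∈ K2) ∧ (v ∈ K2 ↔ v ∈ K3))) :
    ∃ w, ¬((w ∈ K1 ↔ w ∈ K2) ∧ (w ∈ K2 ↔ w ∈ K3)) ∧ D.arc v w = true := by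
  by_cases a1 : v ∈ K1 <;> by_cases a2 : v ∈ K2 <;> by_cases a3 : v ∈ K3
  · exact absurd (by tauto) hv
  · obtain ⟨w, hw, hwB, hwA⟩ := kern_step h1 h3 a1 a3
    exact ⟨w, by tauto, hw⟩
  · obtain ⟨w, hw, hwB, hwA⟩ := kern_step h1 h2 a1 a2
    exact ⟨w, by tauto, hw⟩
  · obtain ⟨w, hw, hwB, hwA⟩ := kern_step h1 h2 a1 a2
    exact ⟨w, by tauto, hw⟩
  · obtain ⟨w, hw, hwB, hwA⟩ := kern_step h2 h1 a2 a1
    exact ⟨w, by tauto, hw⟩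
  · obtain ⟨w, hw, hwB, hwA⟩ := kern_step h2 h1 a2 a1
    exact ⟨w, by tauto, hw⟩
  · obtain ⟨w, hw, hwB, hwA⟩ := kern_step h3 h1 a3 a1
    exact ⟨w, by tauto, hw⟩
  · exact absurd (by tauto) hv

private lemma compl_coords {n : ℕ} {D : FinDigraph n} {K1 K2 K3 : Finset (Fin n)}
    (h1 : IsKernel D K1) (h2 : IsKernel D K2) (h3 : IsKernel D K3) {v u : Fin n}
    (hv : ¬((v ∈ K1 ↔ v ∈ K2) ∧ (v ∈ K2 ↔ v ∈ K3)))
    (key : ∀ x, ¬((x ∈ K1 ↔ x ∈ K2) ∧ (x ∈ K2 ↔ x ∈ K3)) → D.arc v x = true → x = u) :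
    ((u ∈ K1 ↔ ¬(v ∈ K1)) ∧ (u ∈ K2 ↔ ¬(v ∈ K2)) ∧ (u ∈ K3 ↔ ¬(v ∈ K3))) := by
  by_cases a1 : v ∈ K1 <;> by_cases a2 : v ∈ K2 <;> by_cases a3 : v ∈ K3
  · exact absurd (by tauto) hv
  · obtain ⟨x, hx, hxB, hxA⟩ := kern_step h1 h3 a1 a3
    have e1 := key x (by tauto) hx
    subst e1
    obtain ⟨y, hy, hyB, hyA⟩ := kern_step h2 h3 a2 a3
    have e2 := key y (by tauto) hy
    subst e2
    exact ⟨by tauto, by tauto, by tauto⟩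
  · obtain ⟨x, hx, hxB, hxA⟩ := kern_step h1 h2 a1 a2
    have e1 := key x (by tauto) hx
    subst e1
    obtain ⟨y, hy, hyB, hyA⟩ := kern_step h3 h2 a3 a2
    have e2 := key y (by tauto) hy
    subst e2
    exact ⟨by tauto, by tauto, by tauto⟩
  · obtain ⟨x, hx, hxB, hxA⟩ := kern_step h1 h2 a1 a2
    have e1 := key x (by tauto) hx
    subst e1
    obtain ⟨y, hy, hyB, hyA⟩ := kern_step h1 h3 a1 a3
    have e2 := key y (by tauto) hy
    subst e2
    exact ⟨by tauto, by tauto, by tauto⟩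
  · obtain ⟨x, hx, hxB, hxA⟩ := kern_step h2 h1 a2 a1
    have e1 := key x (by tauto) hx
    subst e1
    obtain ⟨y, hy, hyB, hyA⟩ := kern_step h3 h1 a3 a1
    have e2 := key y (by tauto) hy
    subst e2
    exact ⟨by tauto, by tauto, by tauto⟩
  · obtain ⟨x, hx, hxB, hxA⟩ := kern_step h2 h1 a2 a1
    have e1 := key x (by tauto) hx
    subst e1
    obtain ⟨y, hy, hyB, hyA⟩ := kern_step h2 h3 a2 a3
    have e2 := key y (by tauto) hy
    subst e2
    exact ⟨by tauto, by tauto, by tauto⟩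
  · obtain ⟨x, hx, hxB, hxA⟩ := kern_step h3 h1 a3 a1
    have e1 := key x (by tauto) hx
    subst e1
    obtain ⟨y, hy, hyB, hyA⟩ := kern_step h3 h2 a3 a2
    have e2 := key y (by tauto) hy
    subst e2
    exact ⟨by tauto, by tauto, by tauto⟩
  · exact absurd (by tauto) hv

private lemma opp_symm {a b : Prop} [Decidable a] [Decidable b] (h : a ↔ ¬b) : b ↔ ¬a := by
  tauto

private lemma opp_trans {a1 a2 a3 b1 b2 b3 c1 c2 c3 : Prop}
    (hstep : (b1 ↔ ¬a1) ∧ (b2 ↔ ¬a2) ∧ (b3 ↔ ¬a3))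
    (ih : ((b1 ↔ c1) ∧ (b2 ↔ c2) ∧ (b3 ↔ c3)) ∨ ((b1 ↔ ¬c1) ∧ (b2 ↔ ¬c2) ∧ (b3 ↔ ¬c3))) :
    ((a1 ↔ c1) ∧ (a2 ↔ c2) ∧ (a3 ↔ c3)) ∨ ((a1 ↔ ¬c1) ∧ (a2 ↔ ¬c2) ∧ (a3 ↔ ¬c3)) := by
  tauto

private lemma final_contra {p1 p2 p3 q1 q2 q3 r1 r2 r3 : Prop}
    (h12 : ¬(p1 ↔ p2)) (h13 : ¬(q1 ↔ q3)) (h23 : ¬(r2 ↔ r3))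
    (r13 : ((p1 ↔ q1) ∧ (p2 ↔ q2) ∧ (p3 ↔ q3)) ∨ ((p1 ↔ ¬q1) ∧ (p2 ↔ ¬q2) ∧ (p3 ↔ ¬q3)))
    (r23 : ((p1 ↔ r1) ∧ (p2 ↔ r2) ∧ (p3 ↔ r3)) ∨ ((p1 ↔ ¬r1) ∧ (p2 ↔ ¬r2) ∧ (p3 ↔ ¬r3))) :
    False := by
  tauto

private lemma no_three {n : ℕ} (D : FinDigraph n) (hconn : WeaklyConnected D)
    (hcount : arcCount D ≤ n)
    {K1 K2 K3 : Finset (Fin n)} (h1 : IsKernel D K1) (h2 : IsKernel D K2) (h3 : IsKernel D K3)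
    (h12 : K1 ≠ K2) (h13 : K1 ≠ K3) (h23 : K2 ≠ K3) : False := by
  classical
  have diff : ∀ {A B : Finset (Fin n)}, A ≠ B → ∃ v, ¬(v ∈ A ↔ v ∈ B) := by
    intro A B hAB
    by_contra hc
    push_neg at hc
    exact hAB (Finset.ext fun v => hc v)
  obtain ⟨v12, hv12⟩ := diff h12
  obtain ⟨v13, hv13⟩ := diff h13
  obtain ⟨v23, hv23⟩ := diff h23
  set T : Finset (Fin n) :=
    univ.filter (fun v => ¬((v ∈ K1 ↔ v ∈ K2) ∧ (v ∈ K2 ↔ v ∈ K3))) with hT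
  have memT : ∀ v, v ∈ T ↔ ¬((v ∈ K1 ↔ v ∈ K2) ∧ (v ∈ K2 ↔ v ∈ K3)) := by
    intro v; simp only [hT, mem_filter, mem_univ, true_and]
  have hv12T : v12 ∈ T := (memT v12).mpr (by tauto)
  have hv13T : v13 ∈ T := (memT v13).mpr (by tauto)
  have hv23T : v23 ∈ T := (memT v23).mpr (by tauto)
  have exists_out : ∀ v ∈ T, ∃ w ∈ T, D.arc v w = true := by
    intro v hv
    obtain ⟨w, hw, harc⟩ := exists_out_lem h1 h2 h3 ((memT v).mp hv)
    exact ⟨w, (memT w).mpr hw, harc⟩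
  set rT : Fin n → Fin n → Prop :=
    fun v w => D.arc v w = true ∧ v ∈ T ∧ w ∈ T with hrT
  haveI : DecidableRel rT := Classical.decRel _
  set G : SimpleGraph (Fin n) := SimpleGraph.fromRel (fun v w => D.arc v w = true) with hG
  set G' : SimpleGraph (Fin n) := SimpleGraph.fromRel rT with hG'
  haveI : DecidableRel G.Adj := Classical.decRel _
  haveI : DecidableRel G'.Adj := Classical.decRel _
  have hG'le : G' ≤ G := by
    intro a b hab
    rw [hG', fromRel_adj] at hab
    rw [hG, fromRel_adj]
    refine ⟨hab.1, ?_⟩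
    rcases hab.2 with h | h
    · exact Or.inl h.1
    · exact Or.inr h.1
  have hGconn : G.Connected := hconn
  have hcomp := comp_edge hG'le hGconn
  have hadj_iff : ∀ a b, G.Adj a b ↔ (D.arc a b = true ∨ D.arc b a = true) := by
    intro a b
    rw [hG, fromRel_adj]
    constructor
    · exact And.right
    · intro h
      refine ⟨?_, h⟩
      rintro rfl
      rcases h with h | h <;> simp [D.loopless] at h
  have hadjT_iff : ∀ a b, G'.Adj a b ↔ (rT a b ∨ rT b a) := by
    intro a b
    rw [hG', fromRel_adj]
    constructor
    · exact And.right
    · intro h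
      refine ⟨?_, h⟩
      rintro rfl
      rcases h with h | h <;> rw [hrT] at h <;> simp [D.loopless] at h
  have hEfin : G.edgeSet.ncard = #G.edgeFinset := by
    rw [Set.ncard_eq_toFinset_card']
    congr 1
  have hEfin' : G'.edgeSet.ncard = #G'.edgeFinset := by
    rw [Set.ncard_eq_toFinset_card']
    congr 1
  have hE : 2 * G.edgeSet.ncard
      = (univ.filter fun p : Fin n × Fin n =>
          D.arc p.1 p.2 = true ∨ D.arc p.2 p.1 = true).card := by
    rw [hEfin, two_mul_card_edgeFinset]
    congr 1
    ext ⟨a, b⟩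
    simp only [mem_filter, mem_univ, true_and]
    exact hadj_iff a b
  have hE' : 2 * G'.edgeSet.ncard
      = (univ.filter fun p : Fin n × Fin n => rT p.1 p.2 ∨ rT p.2 p.1).card := by
    rw [hEfin', two_mul_card_edgeFinset]
    congr 1
    ext ⟨a, b⟩
    simp only [mem_filter, mem_univ, true_and]
    exact hadjT_iff a b
  have hIE := incl_excl (fun a b => D.arc a b = true)
  have hIE' := incl_excl rT
  have harcCount : (univ.filter fun p : Fin n × Fin n => D.arc p.1 p.2 = true).card
      = arcCount D := rfl
  have hdoub : (univ.filter fun p : Fin n × Fin n => rT p.1 p.2 ∧ rT p.2 p.1).card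
      ≤ (univ.filter fun p : Fin n × Fin n =>
          D.arc p.1 p.2 = true ∧ D.arc p.2 p.1 = true).card := by
    apply Finset.card_le_card
    intro p hp
    rw [mem_filter] at hp ⊢
    refine ⟨hp.1, ?_⟩
    rw [hrT] at hp
    exact ⟨hp.2.1.1, hp.2.2.1⟩
  have hAWTsum : (univ.filter fun p : Fin n × Fin n => rT p.1 p.2).card
      = ∑ v ∈ T, (T.filter fun w => D.arc v w = true).card := by
    rw [Finset.card_eq_sum_card_fiberwise (f := fun p : Fin n × Fin n => p.1) (t := T)
      (fun p hp => by rw [Finset.mem_coe, mem_filter, hrT] at hp; exact hp.2.2.1)]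
    apply Finset.sum_congr rfl
    intro v hv
    refine Finset.card_bij' (fun p _ => p.2) (fun w _ => (v, w)) ?_ ?_ ?_ ?_
    · intro p hp
      simp only [mem_filter, mem_univ, true_and, hrT] at hp ⊢
      exact ⟨hp.1.2.2, hp.2 ▸ hp.1.1⟩
    · intro w hw
      simp only [mem_filter, mem_univ, true_and, hrT] at hw ⊢
      exact ⟨⟨hw.2, hv, hw.1⟩, trivial⟩
    · intro p hp
      simp only [mem_filter] at hp
      exact Prod.ext hp.2.symm rfl
    · intro w hw
      rfl
  have hlow : T.card ≤ ∑ v ∈ T, (T.filter fun w => D.arc v w = true).card := by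
    have h1le : ∀ v ∈ T, 1 ≤ (T.filter fun w => D.arc v w = true).card := by
      intro v hv
      obtain ⟨w, hwT, hw⟩ := exists_out v hv
      exact Finset.card_pos.mpr ⟨w, mem_filter.mpr ⟨hwT, hw⟩⟩
    calc T.card = ∑ _v ∈ T, 1 := by simp
      _ ≤ _ := Finset.sum_le_sum h1le
  -- component counting
  have walk_mem : ∀ {u v : Fin n}, G'.Adj u v → u ∈ T := by
    intro u v huv
    rcases ((hadjT_iff u v).mp huv) with h | h <;> rw [hrT] at h
    · exact h.2.1
    · exact h.2.2
  have reach_T : ∀ {u v : Fin n}, G'.Reachable u v → u ≠ v → u ∈ T := by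
    intro u v h hne
    obtain ⟨p⟩ := h
    cases p with
    | nil => exact absurd rfl hne
    | cons h _ => exact walk_mem h
  haveI : Fintype G'.ConnectedComponent := inferInstance
  set κ : Fin n → G'.ConnectedComponent := G'.connectedComponentMk with hκ
  have hinj : Set.InjOn κ ↑(univ \ T) := by
    intro u hu v hv h
    by_contra hne
    have := reach_T (SimpleGraph.ConnectedComponent.exact h) hne
    rw [Finset.mem_coe, mem_sdiff] at hu
    exact hu.2 this
  have hdisj : Disjoint ((univ \ T).image κ) (T.image κ) := by
    rw [Finset.disjoint_left]
    intro x hx hx'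
    obtain ⟨u, hu, rfl⟩ := mem_image.mp hx
    obtain ⟨v, hv', hκv⟩ := mem_image.mp hx'
    rw [mem_sdiff] at hu
    have hne : u ≠ v := by rintro rfl; exact hu.2 hv'
    have : u ∈ T := reach_T (SimpleGraph.ConnectedComponent.exact hκv.symm) hne
    exact hu.2 this
  have hcards : (univ \ T).card + (T.image κ).card ≤ Nat.card G'.ConnectedComponent := by
    rw [Nat.card_eq_fintype_card]
    calc (univ \ T).card + (T.image κ).card
        = ((univ \ T).image κ).card + (T.image κ).card := by
          rw [Finset.card_image_of_injOn hinj]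
      _ = (((univ \ T).image κ) ∪ (T.image κ)).card :=
          (Finset.card_union_of_disjoint hdisj).symm
      _ ≤ (univ : Finset G'.ConnectedComponent).card := Finset.card_le_univ _
      _ = Fintype.card G'.ConnectedComponent := Finset.card_univ
  have hTcompl : T.card + (univ \ T).card = n := by
    have h := Finset.card_sdiff_of_subset (Finset.subset_univ T)
    have h2 : T.card ≤ (univ : Finset (Fin n)).card := Finset.card_le_univ T
    rw [card_univ, Fintype.card_fin] at h h2
    omega
  have hc1pos : 1 ≤ (T.image κ).card :=
    Finset.card_pos.mpr ⟨κ v12, mem_image_of_mem _ hv12T⟩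
  -- assemble
  have hc1 : (T.image κ).card = 1 := by omega
  have hAWT_eq : ∑ v ∈ T, (T.filter fun w => D.arc v w = true).card = T.card := by omega
  have outdeg1 : ∀ v ∈ T, (T.filter fun w => D.arc v w = true).card = 1 := by
    intro v hv
    by_contra hne
    have h2 : 2 ≤ (T.filter fun w => D.arc v w = true).card := by
      obtain ⟨w, hwT, hw⟩ := exists_out v hv
      have hp : 0 < (T.filter fun w => D.arc v w = true).card :=
        Finset.card_pos.mpr ⟨w, mem_filter.mpr ⟨hwT, hw⟩⟩
      omega
    have hlt : ∑ _v ∈ T, 1 < ∑ v ∈ T, (T.filter fun w => D.arc v w = true).card := by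
      apply Finset.sum_lt_sum
      · intro i hi
        obtain ⟨w, hwT, hw⟩ := exists_out i hi
        exact Finset.card_pos.mpr ⟨w, mem_filter.mpr ⟨hwT, hw⟩⟩
      · exact ⟨v, hv, by omega⟩
    rw [hAWT_eq] at hlt
    simp at hlt
  have hcompl : ∀ v ∈ T, ∀ w, D.arc v w = true → w ∈ T →
      ((w ∈ K1 ↔ ¬(v ∈ K1)) ∧ (w ∈ K2 ↔ ¬(v ∈ K2)) ∧ (w ∈ K3 ↔ ¬(v ∈ K3))) := by
    intro v hv w harc hwT
    obtain ⟨u, hu⟩ := Finset.card_eq_one.mp (outdeg1 v hv)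
    have key : ∀ x, x ∈ T → D.arc v x = true → x = u := by
      intro x hxT hx
      have hmem : x ∈ T.filter fun w => D.arc v w = true := mem_filter.mpr ⟨hxT, hx⟩
      rw [hu, Finset.mem_singleton] at hmem
      exact hmem
    have hwu : w = u := key w hwT harc
    subst hwu
    exact compl_coords h1 h2 h3 ((memT v).mp hv)
      (fun x hx harcx => key x ((memT x).mpr hx) harcx)
  have patwalk : ∀ (u v : Fin n), G'.Walk u v →
      (((u ∈ K1 ↔ v ∈ K1) ∧ (u ∈ K2 ↔ v ∈ K2) ∧ (u ∈ K3 ↔ v ∈ K3)) ∨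
       ((u ∈ K1 ↔ ¬(v ∈ K1)) ∧ (u ∈ K2 ↔ ¬(v ∈ K2)) ∧ (u ∈ K3 ↔ ¬(v ∈ K3)))) := by
    intro u v p
    induction p with
    | nil => exact Or.inl ⟨Iff.rfl, Iff.rfl, Iff.rfl⟩
    | @cons u x v h p ih =>
      have hstep : (x ∈ K1 ↔ ¬(u ∈ K1)) ∧ (x ∈ K2 ↔ ¬(u ∈ K2)) ∧ (x ∈ K3 ↔ ¬(u ∈ K3)) := by
        rcases (hadjT_iff u x).mp h with hh | hh <;> rw [hrT] at hh
        · have hc := hcompl u hh.2.1 x hh.1 hh.2.2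
          exact hc
        · have hc := hcompl x hh.2.1 u hh.1 hh.2.2
          exact ⟨opp_symm hc.1, opp_symm hc.2.1, opp_symm hc.2.2⟩
      exact opp_trans hstep ih
  obtain ⟨x0, hx0⟩ := Finset.card_eq_one.mp hc1
  have hreach : ∀ a ∈ T, ∀ b ∈ T, G'.Reachable a b := by
    intro a ha b hb
    have h1' : κ a = x0 := by
      have := mem_image_of_mem κ ha
      rw [hx0, Finset.mem_singleton] at this
      exact this
    have h2' : κ b = x0 := by
      have := mem_image_of_mem κ hb
      rw [hx0, Finset.mem_singleton] at this
      exact this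
    exact SimpleGraph.ConnectedComponent.exact (h1'.trans h2'.symm)
  obtain ⟨p13⟩ := hreach v12 hv12T v13 hv13T
  obtain ⟨p23⟩ := hreach v12 hv12T v23 hv23T
  have r13 := patwalk _ _ p13
  have r23 := patwalk _ _ p23
  exact final_contra hv12 hv13 hv23 r13 r23

/-- Every unicycle digraph (weakly connected finite digraph with at most one cycle)
has at most two kernels. -/
theorem stmt12 (n : ℕ) (D : FinDigraph n) (hD : IsUnicycle D) :
    Nat.card {K : Finset (Fin n) // IsKernel D K} ≤ 2 := by
  classical
  by_contra hcon
  push_neg at hcon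
  haveI : Fintype {K : Finset (Fin n) // IsKernel D K} := Fintype.ofFinite _
  rw [Nat.card_eq_fintype_card] at hcon
  obtain ⟨a, b, c, hab, hac, hbc⟩ := Fintype.two_lt_card_iff.mp hcon
  exact no_three D hD.1 hD.2 a.2 b.2 c.2 (fun h => hab (Subtype.ext h))
    (fun h => hac (Subtype.ext h)) (fun h => hbc (Subtype.ext h))
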